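/- arXiv:2006.02257 — 3 statements merged into one kernel-verified Lean document; each statement's English description precedes it below -/
import Mathlib

section
/- Let n ≥ 1, let α be a set, and let φ : ℝ → α → α satisfy φ(0)(x) = x and φ(t+s)(x) = φ(t)(φ(s)(x)) for all t, s ∈ ℝ and x ∈ α (a flow). Let A : α → ℂ^{n×n} be such that for every x ∈ α the map t ↦ A(φ(t)(x)) is continuous, and let C : α × ℝ → ℂ^{n×n} satisfy C(x,0) = Id, invertibility of every C(x,t), and, for every x ∈ α and t ∈ ℝ, the map s ↦ C(x,s) has derivative −A(φ(t)(x))·C(x,t) at s = t. Let τ : α → ℝ satisfy τ(φ(t)(x)) = τ(x) − t for all x ∈ α, t ∈ ℝ. Define R : α → ℂ^{n×n} by R(x) := C(x, τ(x))^{-1}. Then R(φ(t)(x)) = C(x,t)·R(x) for all x ∈ α and t ∈ ℝ, and consequently for every x the map t ↦ R(φ(t)(x)) is differentiable with derivative −A(φ(t)(x))·R(φ(t)(x)) at every t ∈ ℝ, i.e. R is an integrating factor solving XR + AR = 0 along the flow. -/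
open Matrix

attribute [local instance] Matrix.normedAddCommGroup Matrix.normedSpace

private lemma matx_hasDerivAt_iff {n : ℕ} {f : ℝ → Matrix (Fin n) (Fin n) ℂ}
    {f' : Matrix (Fin n) (Fin n) ℂ} {t : ℝ} :
    HasDerivAt f f' t ↔ ∀ i j, HasDerivAt (fun s => f s i j) (f' i j) t := by
  exact hasDerivAt_pi.trans (forall_congr' fun i => hasDerivAt_pi)

private lemma det_diff {n : ℕ} {g : ℝ → Matrix (Fin n) (Fin n) ℂ} {t : ℝ}
    (hg : ∀ i j, DifferentiableAt ℝ (fun s => g s i j) t) :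
    DifferentiableAt ℝ (fun s => (g s).det) t := by
  simp only [Matrix.det_apply, Units.smul_def, zsmul_eq_mul]
  apply DifferentiableAt.fun_sum
  intro σ _
  exact (differentiableAt_const _).mul
    (DifferentiableAt.fun_finsetProd fun i _ => hg (σ i) i)

private lemma inv_diff {n : ℕ} {g : ℝ → Matrix (Fin n) (Fin n) ℂ} {t : ℝ}
    (hg : ∀ i j, DifferentiableAt ℝ (fun s => g s i j) t)
    (hdet : (g t).det ≠ 0) (i j : Fin n) :
    DifferentiableAt ℝ (fun s => (g s)⁻¹ i j) t := by
  have heq : ∀ s, (g s)⁻¹ i j = (g s).det⁻¹ * (g s).adjugate i j := by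
    intro s
    rw [Matrix.inv_def, Matrix.smul_apply, Ring.inverse_eq_inv', smul_eq_mul]
  simp only [heq]
  refine ((det_diff hg).inv hdet).mul ?_
  simp only [Matrix.adjugate_apply]
  apply det_diff
  intro a b
  by_cases h : a = j <;> simp [Matrix.updateRow_apply, h, differentiableAt_const, hg a b]

private lemma matx_hasDerivAt_mul {n : ℕ} {f g : ℝ → Matrix (Fin n) (Fin n) ℂ}
    {f' g' : Matrix (Fin n) (Fin n) ℂ} {t : ℝ}
    (hf : HasDerivAt f f' t) (hg : HasDerivAt g g' t) :
    HasDerivAt (fun s => f s * g s) (f' * g t + f t * g') t := by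
  rw [matx_hasDerivAt_iff] at hf hg ⊢
  intro i j
  have h := HasDerivAt.fun_sum (u := Finset.univ)
    (fun k _ => ((hf i k).mul (hg k j)))
  simp only [Matrix.mul_apply, Matrix.add_apply]
  convert h using 1
  rfl
  rfl
  rw [Finset.sum_add_distrib]

private lemma matx_const_of_deriv_zero {n : ℕ} {f : ℝ → Matrix (Fin n) (Fin n) ℂ}
    (h : ∀ s, HasDerivAt f 0 s) (a b : ℝ) : f a = f b := by
  ext i j
  have hd : ∀ s, HasDerivAt (fun u => f u i j) 0 s := by
    intro s
    simpa using (matx_hasDerivAt_iff.1 (h s)) i j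
  exact is_const_of_deriv_eq_zero (fun s => (hd s).differentiableAt)
    (fun s => (hd s).deriv) a b

/-- Lemma 3.1 of the paper: if `τ` satisfies `τ(φ_t x) = τ(x) - t` (an exit
time) and `C` is the attenuation cocycle of `A` along the flow `φ`, then
`R(x) := C(x, τ(x))⁻¹` satisfies `R(φ_t x) = C(x,t) R(x)` and is an
integrating factor: `XR + AR = 0` along the flow. -/
theorem stmt_8 {α : Type*} (n : ℕ) (hn : 1 ≤ n)
    (φ : ℝ → α → α)
    (hφ_zero : ∀ x : α, φ 0 x = x)
    (hφ_add : ∀ (t s : ℝ) (x : α), φ (t + s) x = φ t (φ s x))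
    (A : α → Matrix (Fin n) (Fin n) ℂ)
    (hA_cont : ∀ x : α, Continuous fun t : ℝ => A (φ t x))
    (C : α × ℝ → Matrix (Fin n) (Fin n) ℂ)
    (hC_zero : ∀ x : α, C (x, 0) = 1)
    (hC_inv : ∀ (x : α) (t : ℝ), IsUnit (C (x, t)))
    (hC_ode : ∀ (x : α) (t : ℝ),
      HasDerivAt (fun s : ℝ => C (x, s)) (-(A (φ t x) * C (x, t))) t)
    (τ : α → ℝ)
    (hτ : ∀ (x : α) (t : ℝ), τ (φ t x) = τ x - t)
    (R : α → Matrix (Fin n) (Fin n) ℂ)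
    (hR : ∀ x : α, R x = (C (x, τ x))⁻¹) :
    (∀ (x : α) (t : ℝ), R (φ t x) = C (x, t) * R x) ∧
    (∀ (x : α) (t : ℝ),
      HasDerivAt (fun s : ℝ => R (φ s x)) (-(A (φ t x) * R (φ t x))) t) := by
  have hdet : ∀ (x : α) (t : ℝ), IsUnit (C (x, t)).det := by
    intro x t
    exact (Matrix.isUnit_iff_isUnit_det _).1 (hC_inv x t)
  -- cocycle property
  have key : ∀ (x : α) (t s : ℝ), C (x, t + s) = C (φ t x, s) * C (x, t) := by
    intro x t
    set Y : ℝ → Matrix (Fin n) (Fin n) ℂ := fun s => C (φ t x, s) with hYdef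
    set Z : ℝ → Matrix (Fin n) (Fin n) ℂ := fun s => C (x, t + s) with hZdef
    have hY : ∀ s, HasDerivAt Y (-(A (φ (t + s) x) * Y s)) s := by
      intro s
      have h := hC_ode (φ t x) s
      rwa [← hφ_add s t x, add_comm s t] at h
    have hZ : ∀ s, HasDerivAt Z (-(A (φ (t + s) x) * Z s)) s := by
      intro s
      have h1 : HasDerivAt (fun u : ℝ => t + u) 1 s := by
        simpa using (hasDerivAt_id s).const_add t
      have h := (hC_ode x (t + s)).scomp s h1
      simp only [one_smul] at h
      exact h
    have hYu : ∀ s, IsUnit (Y s).det := fun s => hdet (φ t x) s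
    -- inverse of Y is differentiable, with the standard derivative
    have hYinv : ∀ s, HasDerivAt (fun u => (Y u)⁻¹)
        ((Y s)⁻¹ * (A (φ (t + s) x) * Y s) * (Y s)⁻¹) s := by
      intro s
      have hdiff : ∀ i j, DifferentiableAt ℝ (fun u => (Y u)⁻¹ i j) s := by
        intro i j
        exact inv_diff (fun i j => (matx_hasDerivAt_iff.1 (hY s) i j).differentiableAt)
          (hYu s).ne_zero i j
      set W : Matrix (Fin n) (Fin n) ℂ :=
        Matrix.of fun i j => deriv (fun u => (Y u)⁻¹ i j) s with hWdef
      have hW : HasDerivAt (fun u => (Y u)⁻¹) W s := by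
        rw [matx_hasDerivAt_iff]
        intro i j
        exact (hdiff i j).hasDerivAt
      -- differentiate Y⁻¹ * Y = 1
      have h1 : HasDerivAt (fun u => (Y u)⁻¹ * Y u)
          (W * Y s + (Y s)⁻¹ * -(A (φ (t + s) x) * Y s)) s :=
        matx_hasDerivAt_mul hW (hY s)
      have h2 : (fun u => (Y u)⁻¹ * Y u) = fun _ : ℝ => (1 : Matrix (Fin n) (Fin n) ℂ) := by
        funext u
        exact Matrix.nonsing_inv_mul _ (hdet (φ t x) u)
      rw [h2] at h1
      have h3 : W * Y s + (Y s)⁻¹ * -(A (φ (t + s) x) * Y s) = 0 :=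
        h1.unique (hasDerivAt_const s 1)
      have h4 : W * Y s = (Y s)⁻¹ * (A (φ (t + s) x) * Y s) := by
        rw [mul_neg] at h3
        exact add_neg_eq_zero.mp h3
      have h5 : W = (Y s)⁻¹ * (A (φ (t + s) x) * Y s) * (Y s)⁻¹ := by
        have := congrArg (fun M => M * (Y s)⁻¹) h4
        simpa [mul_assoc, Matrix.mul_nonsing_inv _ (hYu s)] using this
      rw [← h5]
      exact hW
    -- G = Y⁻¹ * Z has zero derivative
    have hG : ∀ s, HasDerivAt (fun u => (Y u)⁻¹ * Z u) 0 s := by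
      intro s
      have h := matx_hasDerivAt_mul (hYinv s) (hZ s)
      have he : (Y s)⁻¹ * (A (φ (t + s) x) * Y s) * (Y s)⁻¹ * Z s
          + (Y s)⁻¹ * -(A (φ (t + s) x) * Z s) = 0 := by
        have hinv : (Y s)⁻¹ * Y s = 1 := Matrix.nonsing_inv_mul _ (hYu s)
        calc (Y s)⁻¹ * (A (φ (t + s) x) * Y s) * (Y s)⁻¹ * Z s
            + (Y s)⁻¹ * -(A (φ (t + s) x) * Z s)
            = (Y s)⁻¹ * A (φ (t + s) x) * (Y s * (Y s)⁻¹) * Z s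
              - (Y s)⁻¹ * A (φ (t + s) x) * Z s := by
              simp [mul_assoc, mul_neg, sub_eq_add_neg]
          _ = 0 := by
              rw [Matrix.mul_nonsing_inv _ (hYu s)]
              simp [mul_assoc]
      rwa [he] at h
    intro s
    have hc := matx_const_of_deriv_zero hG s 0
    have h0 : (Y 0)⁻¹ * Z 0 = C (x, t) := by
      simp [hYdef, hZdef, hC_zero]
    rw [h0] at hc
    -- hc : (Y s)⁻¹ * Z s = C (x, t)
    have := congrArg (fun M => Y s * M) hc
    simpa [← mul_assoc, Matrix.mul_nonsing_inv _ (hYu s)] using this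
  have part1 : ∀ (x : α) (t : ℝ), R (φ t x) = C (x, t) * R x := by
    intro x t
    have h1 := key x t (τ x - t)
    rw [show t + (τ x - t) = τ x by ring] at h1
    rw [hR, hτ, hR x]
    -- goal : (C (φ t x, τ x - t))⁻¹ = C (x, t) * (C (x, τ x))⁻¹
    have h2 : C (φ t x, τ x - t) = C (x, τ x) * (C (x, t))⁻¹ := by
      rw [h1, mul_assoc, Matrix.mul_nonsing_inv _ (hdet x t), mul_one]
    rw [h2, Matrix.mul_inv_rev, Matrix.nonsing_inv_nonsing_inv _ (hdet x t)]
  refine ⟨part1, ?_⟩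
  intro x t
  have heq : (fun s : ℝ => R (φ s x)) = fun s : ℝ => C (x, s) * R x :=
    funext fun s => part1 x s
  rw [heq]
  have h := matx_hasDerivAt_mul (hC_ode x t) (hasDerivAt_const t (R x))
  have he : -(A (φ t x) * C (x, t)) * R x + C (x, t) * 0
      = -(A (φ t x) * R (φ t x)) := by
    rw [part1 x t]
    simp [mul_assoc]
  rwa [he] at h
end

section
/- Let n ≥ 1, T > 0, and let A, B : [0,T] → ℂ^{n×n}. Suppose U_A, U_B : [0,T] → ℂ^{n×n} are differentiable on [0,T] with U_A'(t) + A(t)U_A(t) = 0, U_B'(t) + B(t)U_B(t) = 0 for all t ∈ [0,T], U_A(T) = U_B(T) = Id, and every U_B(t) is invertible. Then W(t) := U_A(t)·U_B(t)^{-1} − Id satisfies W(T) = 0 and the transport equation W'(t) + A(t)W(t) − W(t)B(t) = −(A(t) − B(t)) for all t ∈ [0,T]; in particular U_A(0)·U_B(0)^{-1} = Id + W(0). -/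
open Matrix

attribute [local instance] Matrix.normedAddCommGroup Matrix.normedSpace

/-- Core calculus computation in an abstract complete normed algebra: if
`U_A' = -A U_A`, `U_B' = -B U_B` and `U_B(t)` is a unit, then
`W = U_A · (U_B)⁻¹ - 1` satisfies the transport equation
`W' = -(A W) + W B - (A - B)`. -/
theorem core_transport {R : Type*} [NormedRing R] [NormedAlgebra ℝ R] [CompleteSpace R]
    {A B UA UB : ℝ → R} {s : Set ℝ} {t : ℝ}
    (hUA : HasDerivWithinAt UA (-(A t * UA t)) s t)
    (hUB : HasDerivWithinAt UB (-(B t * UB t)) s t)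
    (hu : IsUnit (UB t)) :
    HasDerivWithinAt (fun τ => UA τ * Ring.inverse (UB τ) - 1)
      (-(A t * (UA t * Ring.inverse (UB t) - 1)) + (UA t * Ring.inverse (UB t) - 1) * B t
        - (A t - B t)) s t := by
  obtain ⟨u, huu⟩ := hu
  have hinv : HasDerivWithinAt (fun τ => Ring.inverse (UB τ))
      (Ring.inverse (UB t) * B t) s t := by
    have hF := hasFDerivAt_ringInverse (𝕜 := ℝ) (R := R) u
    rw [huu] at hF
    have := hF.comp_hasDerivWithinAt t hUB
    convert this using 1
    · rfl
    · rfl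
    have h1 : Ring.inverse (UB t) = (↑u⁻¹ : R) := by
      rw [← huu, Ring.inverse_unit]
    simp only [ContinuousLinearMap.neg_apply, ContinuousLinearMap.mulLeftRight_apply, h1]
    rw [show ((↑u⁻¹ : R) * -(B t * UB t) * ↑u⁻¹) = -(↑u⁻¹ * B t * (UB t * ↑u⁻¹)) by
      noncomm_ring]
    rw [← huu, Units.mul_inv, mul_one, neg_neg]
  have hprod := hUA.mul hinv
  have := hprod.sub_const 1
  convert this using 1
  · rfl
  · rfl
  · noncomm_ring

/-- Type synonym for `n × n` complex matrices carrying the `L∞`-operator-norm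
normed-ring structure (for which `Ring.inverse` is differentiable at units). -/
def MOp (n : ℕ) : Type := Matrix (Fin n) (Fin n) ℂ

noncomputable instance (n : ℕ) : NormedRing (MOp n) :=
  show NormedRing (Matrix (Fin n) (Fin n) ℂ) from Matrix.linftyOpNormedRing

noncomputable instance (n : ℕ) : NormedAlgebra ℝ (MOp n) :=
  show @NormedAlgebra ℝ (Matrix (Fin n) (Fin n) ℂ) _ Matrix.linftyOpSemiNormedRing from
    Matrix.linftyOpNormedAlgebra

instance (n : ℕ) : FiniteDimensional ℝ (MOp n) :=
  show FiniteDimensional ℝ (Matrix (Fin n) (Fin n) ℂ) from inferInstance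

instance (n : ℕ) : CompleteSpace (MOp n) := FiniteDimensional.complete ℝ _

/-- The identity, as a continuous `ℝ`-linear map from sup-norm matrices to `MOp`. -/
noncomputable def toOp (n : ℕ) : Matrix (Fin n) (Fin n) ℂ →L[ℝ] MOp n :=
  LinearMap.toContinuousLinearMap
    { toFun := fun x => x
      map_add' := fun _ _ => rfl
      map_smul' := fun _ _ => rfl }

/-- The identity, as a continuous `ℝ`-linear map from `MOp` to sup-norm matrices. -/
noncomputable def ofOp (n : ℕ) : MOp n →L[ℝ] Matrix (Fin n) (Fin n) ℂ :=
  LinearMap.toContinuousLinearMap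
    { toFun := fun x => x
      map_add' := fun _ _ => rfl
      map_smul' := fun _ _ => rfl }

/-- The pseudo-linearization identity along one geodesic (Proposition 3.4 of
the paper): with fundamental solutions `U_A, U_B` of `U' + AU = 0`,
`U' + BU = 0`, `U(T) = Id`, the map `W := U_A U_B⁻¹ - Id` satisfies `W(T) = 0`
and the transport equation `W' + AW - WB = -(A - B)`; in particular
`U_A(0) U_B(0)⁻¹ = Id + W(0)`. -/
theorem stmt_11 (n : ℕ) (hn : 1 ≤ n) (T : ℝ) (hT : 0 < T)
    (A B UA UB : ℝ → Matrix (Fin n) (Fin n) ℂ)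
    (hUA : ∀ t ∈ Set.Icc (0 : ℝ) T,
      HasDerivWithinAt UA (-(A t * UA t)) (Set.Icc (0 : ℝ) T) t)
    (hUB : ∀ t ∈ Set.Icc (0 : ℝ) T,
      HasDerivWithinAt UB (-(B t * UB t)) (Set.Icc (0 : ℝ) T) t)
    (hUAT : UA T = 1) (hUBT : UB T = 1)
    (hUB_inv : ∀ t ∈ Set.Icc (0 : ℝ) T, IsUnit (UB t)) :
    UA T * (UB T)⁻¹ - 1 = 0 ∧
    (∀ t ∈ Set.Icc (0 : ℝ) T,
      HasDerivWithinAt (fun s => UA s * (UB s)⁻¹ - 1)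
        (-(A t * (UA t * (UB t)⁻¹ - 1)) + (UA t * (UB t)⁻¹ - 1) * B t
          - (A t - B t))
        (Set.Icc (0 : ℝ) T) t) ∧
    UA 0 * (UB 0)⁻¹ = 1 + (UA 0 * (UB 0)⁻¹ - 1) := by
  refine ⟨by simp [hUAT, hUBT], ?_, by abel⟩
  intro t ht
  -- move the hypotheses to the `MOp` world
  have hA' : HasDerivWithinAt (fun τ : ℝ => (toOp n (UA τ) : MOp n)) (toOp n (-(A t * UA t)))
      (Set.Icc (0 : ℝ) T) t :=
    (toOp n).hasFDerivAt.comp_hasDerivWithinAt t (hUA t ht)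
  have hB' : HasDerivWithinAt (fun τ : ℝ => (toOp n (UB τ) : MOp n)) (toOp n (-(B t * UB t)))
      (Set.Icc (0 : ℝ) T) t :=
    (toOp n).hasFDerivAt.comp_hasDerivWithinAt t (hUB t ht)
  have hA'' : HasDerivWithinAt (F := MOp n) (fun τ : ℝ => (UA τ : MOp n))
      (-(A t * UA t : Matrix (Fin n) (Fin n) ℂ) : MOp n) (Set.Icc (0 : ℝ) T) t := hA'
  have hB'' : HasDerivWithinAt (F := MOp n) (fun τ : ℝ => (UB τ : MOp n))
      (-(B t * UB t : Matrix (Fin n) (Fin n) ℂ) : MOp n) (Set.Icc (0 : ℝ) T) t := hB'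
  have hu : IsUnit ((UB t : Matrix (Fin n) (Fin n) ℂ) : MOp n) := hUB_inv t ht
  have hw := core_transport (R := MOp n)
    (A := fun τ => (A τ : MOp n)) (B := fun τ => (B τ : MOp n))
    (UA := fun τ => (UA τ : MOp n)) (UB := fun τ => (UB τ : MOp n)) hA'' hB'' hu
  -- move back to the sup-norm world
  have hw' := (ofOp n).hasFDerivAt.comp_hasDerivWithinAt t hw
  simp_rw [Matrix.nonsing_inv_eq_ringInverse]
  exact hw'
end

section
/- Let n ≥ 1, T > 0, and let A, B : [0,T] → ℂ^{n×n} be continuous. Suppose U : [0,T] → ℂ^{n×n} is differentiable on [0,T], takes invertible values, satisfies U(0) = U(T) = Id, and U'(t) = U(t)B(t) − A(t)U(t) for all t ∈ [0,T] (i.e. B = U^{-1}U' + U^{-1}AU). Let U_A, U_B : [0,T] → ℂ^{n×n} be differentiable on [0,T] with U_A'(t) + A(t)U_A(t) = 0, U_B'(t) + B(t)U_B(t) = 0 for all t ∈ [0,T] and U_A(T) = U_B(T) = Id. Then U_A(t) = U(t)·U_B(t) for all t ∈ [0,T]; in particular U_A(0) = U_B(0), i.e. the scattering data of A and of B along this geodesic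 coincide. -/
open Matrix

attribute [local instance] Matrix.normedAddCommGroup Matrix.normedSpace

section Aux

variable {n : ℕ}

private lemma matrix_norm_mul_le (x y : Matrix (Fin n) (Fin n) ℂ) :
    ‖x * y‖ ≤ (n : ℝ) * ‖x‖ * ‖y‖ := by
  rcases Nat.eq_zero_or_pos n with h | h
  · subst h
    refine (Matrix.norm_le_iff (by positivity)).2 fun i _ => i.elim0
  refine (Matrix.norm_le_iff (by positivity)).2 fun i j => ?_
  calc ‖(x * y) i j‖ = ‖∑ k, x i k * y k j‖ := by rw [Matrix.mul_apply]
    _ ≤ ∑ k, ‖x i k * y k j‖ := norm_sum_le _ _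
    _ ≤ ∑ _k : Fin n, ‖x‖ * ‖y‖ := by
        refine Finset.sum_le_sum fun k _ => ?_
        rw [norm_mul]
        exact mul_le_mul (Matrix.norm_entry_le_entrywise_sup_norm x)
          (Matrix.norm_entry_le_entrywise_sup_norm y) (norm_nonneg _) (norm_nonneg _)
    _ = (n : ℝ) * ‖x‖ * ‖y‖ := by simp [Finset.sum_const, mul_assoc]

/-- Matrix multiplication as a continuous bilinear map over ℝ. -/
private noncomputable def mulCLM (n : ℕ) :
    Matrix (Fin n) (Fin n) ℂ →L[ℝ] Matrix (Fin n) (Fin n) ℂ →L[ℝ] Matrix (Fin n) (Fin n) ℂ :=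
  LinearMap.mkContinuous₂ (LinearMap.mul ℝ (Matrix (Fin n) (Fin n) ℂ)) n
    (fun x y => by simpa using matrix_norm_mul_le x y)

@[simp] private lemma mulCLM_apply (x y : Matrix (Fin n) (Fin n) ℂ) :
    mulCLM n x y = x * y := rfl

private lemma HasDerivWithinAt.matMul {f g : ℝ → Matrix (Fin n) (Fin n) ℂ}
    {f' g' : Matrix (Fin n) (Fin n) ℂ} {s : Set ℝ} {t : ℝ}
    (hf : HasDerivWithinAt f f' s t) (hg : HasDerivWithinAt g g' s t) :
    HasDerivWithinAt (fun t => f t * g t) (f' * g t + f t * g') s t := by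
  have h := ((mulCLM n).isBoundedBilinearMap.hasFDerivAt
    (f t, g t)).comp_hasDerivWithinAt t (hf.prodMk hg)
  have hd : (mulCLM n).isBoundedBilinearMap.deriv (f t, g t) (f', g') =
      f' * g t + f t * g' := by
    rw [IsBoundedBilinearMap.deriv_apply]
    simp [add_comm]
    exact rfl
  rw [hd] at h
  exact h

end Aux

/-- The 'if' direction of Proposition 3.6 of the paper along one geodesic:
if `U` is an invertible-valued gauge with `U(0) = U(T) = Id` carrying `A` to
`B`, i.e. `U' = UB - AU`, then the fundamental solutions satisfy
`U_A = U · U_B`; in particular the scattering data agree: `U_A(0) = U_B(0)`. -/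
theorem stmt_13 (n : ℕ) (hn : 1 ≤ n) (T : ℝ) (hT : 0 < T)
    (A B : ℝ → Matrix (Fin n) (Fin n) ℂ)
    (hA_cont : ContinuousOn A (Set.Icc (0 : ℝ) T))
    (hB_cont : ContinuousOn B (Set.Icc (0 : ℝ) T))
    (U : ℝ → Matrix (Fin n) (Fin n) ℂ)
    (hU_inv : ∀ t ∈ Set.Icc (0 : ℝ) T, IsUnit (U t))
    (hU0 : U 0 = 1) (hUT : U T = 1)
    (hU : ∀ t ∈ Set.Icc (0 : ℝ) T,
      HasDerivWithinAt U (U t * B t - A t * U t) (Set.Icc (0 : ℝ) T) t)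
    (UA UB : ℝ → Matrix (Fin n) (Fin n) ℂ)
    (hUA : ∀ t ∈ Set.Icc (0 : ℝ) T,
      HasDerivWithinAt UA (-(A t * UA t)) (Set.Icc (0 : ℝ) T) t)
    (hUB : ∀ t ∈ Set.Icc (0 : ℝ) T,
      HasDerivWithinAt UB (-(B t * UB t)) (Set.Icc (0 : ℝ) T) t)
    (hUAT : UA T = 1) (hUBT : UB T = 1) :
    (∀ t ∈ Set.Icc (0 : ℝ) T, UA t = U t * UB t) ∧ UA 0 = UB 0 := by
  obtain ⟨C, hC⟩ : ∃ C, ∀ t ∈ Set.Icc (0 : ℝ) T, ‖A t‖ ≤ C :=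
    isCompact_Icc.exists_bound_of_continuousOn hA_cont
  have hC0 : 0 ≤ C := le_trans (norm_nonneg _) (hC 0 ⟨le_rfl, hT.le⟩)
  set proj : ℝ → ℝ := fun t => max 0 (min t T) with hproj
  have hprojmem : ∀ t, proj t ∈ Set.Icc (0 : ℝ) T := fun t =>
    ⟨le_max_left _ _, max_le hT.le (min_le_right _ _)⟩
  have hprojeq : ∀ t ∈ Set.Icc (0 : ℝ) T, proj t = t := fun t ht => by
    simp [hproj, min_eq_left ht.2, max_eq_right ht.1]
  set v : ℝ → Matrix (Fin n) (Fin n) ℂ → Matrix (Fin n) (Fin n) ℂ :=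
    fun t x => -(A (proj t) * x) with hv_def
  set K : NNReal := ⟨n * C, by positivity⟩ with hK
  have hv : ∀ t, LipschitzOnWith K (v t) Set.univ := by
    intro t
    rw [lipschitzOnWith_univ]
    apply LipschitzWith.of_dist_le_mul
    intro x y
    simp only [dist_eq_norm, hv_def]
    have h1 : -(A (proj t) * x) - -(A (proj t) * y) = A (proj t) * (y - x) := by
      noncomm_ring
    rw [h1]
    have : (K : ℝ) = n * C := rfl
    rw [this]
    calc ‖A (proj t) * (y - x)‖ ≤ (n : ℝ) * ‖A (proj t)‖ * ‖y - x‖ := matrix_norm_mul_le _ _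
      _ ≤ (n : ℝ) * C * ‖x - y‖ := by
          rw [norm_sub_rev y x]
          gcongr
          exact hC _ (hprojmem t)
  set V : ℝ → Matrix (Fin n) (Fin n) ℂ := fun t => U t * UB t with hV_def
  have hV : ∀ t ∈ Set.Icc (0 : ℝ) T,
      HasDerivWithinAt V (-(A t * V t)) (Set.Icc (0 : ℝ) T) t := by
    intro t ht
    have h := (hU t ht).matMul (hUB t ht)
    have heq : (U t * B t - A t * U t) * UB t + U t * -(B t * UB t)
        = -(A t * V t) := by
      simp only [hV_def]
      noncomm_ring
    rwa [heq] at h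
  have hUAcont : ContinuousOn UA (Set.Icc (0 : ℝ) T) :=
    fun t ht => (hUA t ht).continuousWithinAt
  have hVcont : ContinuousOn V (Set.Icc (0 : ℝ) T) :=
    fun t ht => (hV t ht).continuousWithinAt
  have hUA' : ∀ t ∈ Set.Ioc (0 : ℝ) T, HasDerivWithinAt UA (v t (UA t)) (Set.Iic t) t := by
    intro t ht
    have := (hUA t ⟨ht.1.le, ht.2⟩).mono_of_mem_nhdsWithin (Icc_mem_nhdsLE_of_mem ht)
    simp only [hv_def, hprojeq t ⟨ht.1.le, ht.2⟩]
    exact this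
  have hV' : ∀ t ∈ Set.Ioc (0 : ℝ) T, HasDerivWithinAt V (v t (V t)) (Set.Iic t) t := by
    intro t ht
    have := (hV t ⟨ht.1.le, ht.2⟩).mono_of_mem_nhdsWithin (Icc_mem_nhdsLE_of_mem ht)
    simp only [hv_def, hprojeq t ⟨ht.1.le, ht.2⟩]
    exact this
  have key : Set.EqOn UA V (Set.Icc (0 : ℝ) T) :=
    ODE_solution_unique_of_mem_Icc_left (fun t _ => hv t) hUAcont hUA' (fun _ _ => trivial)
      hVcont hV' (fun _ _ => trivial)
      (by simp [hV_def, hUAT, hUT, hUBT])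
  refine ⟨fun t ht => key ht, ?_⟩
  have h0 := key ⟨le_rfl, hT.le⟩
  simpa [hV_def, hU0] using h0
end
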